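/- For every real number c, the scale-mixture identity exp(−2 · max(0, c)) = ∫₀^∞ (2πλ)^{−1/2} · exp(−(c + λ)²/(2λ)) dλ holds, where the integral is over λ ∈ (0, ∞) with respect to Lebesgue measure. -/

import Mathlib

open MeasureTheory Real

-- key lemma, b > 0 case
lemma aux_key_pos (b : ℝ) (hb : 0 < b) :
    ∫ l in Set.Ioi (0 : ℝ), l ^ (-(1 : ℝ) / 2) * Real.exp (-(b ^ 2 / (2 * l) + l / 2))
      = Real.sqrt (2 * Real.pi) * Real.exp (-b) := by
  set r : ℝ → ℝ := fun s => Real.sqrt (s ^ 2 + 2 * b) with hr_def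
  set ψ : ℝ → ℝ := fun s => (s + r s) ^ 2 / 2 with hψ_def
  set ψ' : ℝ → ℝ := fun s => (s + r s) * (1 + s / r s) with hψ'_def
  have hrpos : ∀ s, 0 < r s := fun s => Real.sqrt_pos.2 (by positivity)
  have hr2 : ∀ s, r s ^ 2 = s ^ 2 + 2 * b := fun s => Real.sq_sqrt (by positivity)
  have habs : ∀ s : ℝ, |s| < r s := by
    intro s
    have : Real.sqrt (s ^ 2) < r s := by
      apply Real.sqrt_lt_sqrt (by positivity); linarith
    simpa [Real.sqrt_sq_eq_abs] using this
  have htpos : ∀ s : ℝ, 0 < s + r s := fun s => by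
    have := (abs_lt.1 (habs s)).1; linarith
  have hderiv : ∀ s : ℝ, HasDerivAt ψ (ψ' s) s := by
    intro s
    have h1 : HasDerivAt (fun s : ℝ => s ^ 2 + 2 * b) (2 * s) s := by
      simpa using ((hasDerivAt_pow 2 s).add_const (2 * b))
    have h2 : HasDerivAt r (1 / (2 * r s) * (2 * s)) s :=
      (Real.hasDerivAt_sqrt (by positivity)).comp s h1
    have h3 : HasDerivAt (fun s => s + r s) (1 + s / r s) s := by
      have := (hasDerivAt_id s).add h2
      refine this.congr_deriv ?_
      ring
    have h4 : HasDerivAt ψ ((2 * (s + r s) ^ 1 * (1 + s / r s)) / 2) s := by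
      exact ((h3.pow 2).div_const 2)
    convert h4 using 1
    ring
  have hψ'pos : ∀ s : ℝ, 0 < ψ' s := by
    intro s
    have h1 := htpos s
    have h2 : 0 < 1 + s / r s := by
      have : -1 < s / r s := by
        rw [lt_div_iff₀ (hrpos s)]
        have := (abs_lt.1 (habs s)).1; linarith
      linarith
    positivity
  have hmono : StrictMono ψ := by
    apply strictMono_of_deriv_pos
    intro s
    rw [(hderiv s).deriv]
    exact hψ'pos s
  have himg : ψ '' Set.univ = Set.Ioi (0 : ℝ) := by
    ext x
    simp only [Set.image_univ, Set.mem_range, Set.mem_Ioi]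
    constructor
    · rintro ⟨s, rfl⟩
      have := htpos s
      positivity
    · intro hx
      set t := Real.sqrt (2 * x) with ht_def
      have htp : 0 < t := Real.sqrt_pos.2 (by linarith)
      have ht2 : t ^ 2 = 2 * x := Real.sq_sqrt (by linarith)
      refine ⟨(t ^ 2 - 2 * b) / (2 * t), ?_⟩
      have hrs : r ((t ^ 2 - 2 * b) / (2 * t)) = (t ^ 2 + 2 * b) / (2 * t) := by
        show Real.sqrt (((t ^ 2 - 2 * b) / (2 * t)) ^ 2 + 2 * b) = (t ^ 2 + 2 * b) / (2 * t)
        rw [show ((t ^ 2 - 2 * b) / (2 * t)) ^ 2 + 2 * b = ((t ^ 2 + 2 * b) / (2 * t)) ^ 2 by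
          field_simp; ring]
        exact Real.sqrt_sq (by positivity)
      simp only [hψ_def, hrs]
      rw [show (t ^ 2 - 2 * b) / (2 * t) + (t ^ 2 + 2 * b) / (2 * t) = t by field_simp; ring]
      rw [ht2]; ring
  have hinj : Set.InjOn ψ Set.univ := hmono.injective.injOn
  have hchg := integral_image_eq_integral_abs_deriv_smul MeasurableSet.univ
      (fun s _ => (hderiv s).hasDerivWithinAt) hinj
      (fun l => l ^ (-(1 : ℝ) / 2) * Real.exp (-(b ^ 2 / (2 * l) + l / 2)))
  rw [himg] at hchg
  rw [hchg, setIntegral_univ]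
  have hpoint : ∀ s : ℝ,
      |ψ' s| • ((ψ s) ^ (-(1 : ℝ) / 2) * Real.exp (-(b ^ 2 / (2 * ψ s) + ψ s / 2)))
        = Real.sqrt 2 * Real.exp (-b) *
            (Real.exp (-s ^ 2) + s / r s * Real.exp (-s ^ 2)) := by
    intro s
    have ht := htpos s
    have hrp := hrpos s
    have hrr := hr2 s
    set t := s + r s with ht_def
    have habsψ' : |ψ' s| = ψ' s := abs_of_pos (hψ'pos s)
    have hψval : ψ s = t ^ 2 / 2 := rfl
    have hrpow : (t ^ 2 / 2) ^ (-(1 : ℝ) / 2) = Real.sqrt 2 / t := by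
      rw [show (-(1 : ℝ) / 2) = -(1 / 2) by ring, Real.rpow_neg (by positivity),
        ← Real.sqrt_eq_rpow]
      rw [show t ^ 2 / 2 = t ^ 2 / 2 by rfl]
      rw [Real.sqrt_div (by positivity) 2, Real.sqrt_sq ht.le]
      rw [inv_div]
    have hexp : b ^ 2 / (2 * ψ s) + ψ s / 2 = s ^ 2 + b := by
      rw [hψval]
      have h2b : 2 * b = r s ^ 2 - s ^ 2 := by linarith [hr2 s]
      have htne : t ≠ 0 := ne_of_gt ht
      field_simp
      rw [ht_def]
      linear_combination (-(2 * b) + (3 * s + r s) * (s + r s)) * hrr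
    rw [habsψ', hψval, hrpow, hexp]
    rw [show -(s ^ 2 + b) = -b + -s ^ 2 by ring, Real.exp_add]
    have : ψ' s = t * (1 + s / r s) := rfl
    rw [this]
    rw [smul_eq_mul]
    field_simp
  rw [show (fun s => |ψ' s| • ((ψ s) ^ (-(1 : ℝ) / 2) * Real.exp (-(b ^ 2 / (2 * ψ s) + ψ s / 2))))
      = fun s => Real.sqrt 2 * Real.exp (-b) *
          (Real.exp (-s ^ 2) + s / r s * Real.exp (-s ^ 2)) from funext hpoint]
  rw [MeasureTheory.integral_const_mul]
  have hcontr : Continuous r := by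
    apply Real.continuous_sqrt.comp
    continuity
  have int1 : Integrable (fun x : ℝ => Real.exp (-x ^ 2)) := by
    simpa using integrable_exp_neg_mul_sq (one_pos)
  have int2 : Integrable (fun x : ℝ => x / r x * Real.exp (-x ^ 2)) := by
    apply int1.mono
    · exact ((continuous_id.div hcontr fun x => (hrpos x).ne').mul
        (Real.continuous_exp.comp (by continuity))).aestronglyMeasurable
    · filter_upwards with x
      simp only [norm_mul, Real.norm_eq_abs, Real.abs_exp]
      have h1 : |x / r x| ≤ 1 := by
        rw [abs_div, abs_of_pos (hrpos x)]
        rw [div_le_one (hrpos x)]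
        exact (habs x).le
      nlinarith [Real.exp_pos (-x ^ 2), abs_nonneg (x / r x)]
  rw [integral_add int1 int2]
  have hodd : ∫ x : ℝ, x / r x * Real.exp (-x ^ 2) = 0 := by
    have h := integral_neg_eq_self (fun x : ℝ => x / r x * Real.exp (-x ^ 2)) volume
    have h2 : (∫ x : ℝ, (fun x : ℝ => x / r x * Real.exp (-x ^ 2)) (-x))
        = ∫ x : ℝ, -(x / r x * Real.exp (-x ^ 2)) := by
      congr 1
      funext x
      show (-x) / Real.sqrt ((-x) ^ 2 + 2 * b) * Real.exp (-(-x) ^ 2)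
          = -(x / Real.sqrt (x ^ 2 + 2 * b) * Real.exp (-x ^ 2))
      rw [neg_sq]
      ring
    rw [h2, integral_neg] at h
    linarith
  have hgauss : ∫ x : ℝ, Real.exp (-x ^ 2) = Real.sqrt Real.pi := by
    simpa using integral_gaussian 1
  rw [hodd, hgauss]
  rw [Real.sqrt_mul (by norm_num : (0:ℝ) ≤ 2)]
  ring

lemma aux_key_zero :
    ∫ l in Set.Ioi (0 : ℝ), l ^ (-(1 : ℝ) / 2) * Real.exp (-(l / 2))
      = Real.sqrt (2 * Real.pi) := by
  have hderiv : ∀ t ∈ Set.Ioi (0 : ℝ),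
      HasDerivWithinAt (fun t : ℝ => t ^ 2) (2 * t) (Set.Ioi 0) t := by
    intro t _
    simpa using (hasDerivAt_pow 2 t).hasDerivWithinAt
  have hinj : Set.InjOn (fun t : ℝ => t ^ 2) (Set.Ioi 0) := by
    intro a ha b hb h
    simp only [Set.mem_Ioi] at ha hb
    dsimp only at h
    nlinarith
  have himg : (fun t : ℝ => t ^ 2) '' Set.Ioi 0 = Set.Ioi 0 := by
    ext x
    simp only [Set.mem_image, Set.mem_Ioi]
    constructor
    · rintro ⟨t, ht, rfl⟩; positivity
    · intro hx
      exact ⟨Real.sqrt x, Real.sqrt_pos.2 hx, Real.sq_sqrt hx.le⟩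
  have hchg := integral_image_eq_integral_abs_deriv_smul measurableSet_Ioi hderiv hinj
      (fun l => l ^ (-(1 : ℝ) / 2) * Real.exp (-(l / 2)))
  rw [himg] at hchg
  rw [hchg]
  have hpoint : ∀ t ∈ Set.Ioi (0 : ℝ),
      |2 * t| • ((t ^ 2 : ℝ) ^ (-(1 : ℝ) / 2) * Real.exp (-(t ^ 2 / 2)))
        = 2 * Real.exp (-(1 / 2) * t ^ 2) := by
    intro t ht
    simp only [Set.mem_Ioi] at ht
    have h1 : ((t ^ 2 : ℝ)) ^ (-(1 : ℝ) / 2) = 1 / t := by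
      rw [show (-(1 : ℝ) / 2) = -(1 / 2) by ring, Real.rpow_neg (by positivity),
        ← Real.sqrt_eq_rpow, Real.sqrt_sq ht.le, one_div]
    rw [h1, abs_of_pos (by positivity : (0:ℝ) < 2 * t), smul_eq_mul]
    rw [show -(1 / 2) * t ^ 2 = -(t ^ 2 / 2) by ring]
    field_simp
  rw [setIntegral_congr_fun measurableSet_Ioi hpoint]
  rw [MeasureTheory.integral_const_mul, integral_gaussian_Ioi]
  rw [show Real.pi / (1 / 2) = 2 * Real.pi by ring]
  ring

lemma aux_key (b : ℝ) (hb : 0 ≤ b) :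
    ∫ l in Set.Ioi (0 : ℝ), l ^ (-(1 : ℝ) / 2) * Real.exp (-(b ^ 2 / (2 * l) + l / 2))
      = Real.sqrt (2 * Real.pi) * Real.exp (-b) := by
  rcases hb.lt_or_eq with hb' | hb'
  · exact aux_key_pos b hb'
  · subst hb'
    simp only [ne_eq, OfNat.ofNat_ne_zero, not_false_eq_true, zero_pow, zero_div, zero_add,
      neg_zero, Real.exp_zero, mul_one]
    exact aux_key_zero

theorem stmt3 (c : ℝ) :
    ∫ l in Set.Ioi (0 : ℝ),
        (2 * Real.pi * l) ^ (-(1 : ℝ) / 2) * Real.exp (-(c + l) ^ 2 / (2 * l))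
      = Real.exp (-2 * max 0 c) := by
  have hcongr : ∀ l ∈ Set.Ioi (0 : ℝ),
      (2 * Real.pi * l) ^ (-(1 : ℝ) / 2) * Real.exp (-(c + l) ^ 2 / (2 * l))
        = (2 * Real.pi) ^ (-(1 : ℝ) / 2) * Real.exp (-c) *
            (l ^ (-(1 : ℝ) / 2) * Real.exp (-(|c| ^ 2 / (2 * l) + l / 2))) := by
    intro l hl
    simp only [Set.mem_Ioi] at hl
    have h1 : (2 * Real.pi * l) ^ (-(1 : ℝ) / 2)
        = (2 * Real.pi) ^ (-(1 : ℝ) / 2) * l ^ (-(1 : ℝ) / 2) :=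
      Real.mul_rpow (by positivity) hl.le
    have h2 : -(c + l) ^ 2 / (2 * l) = -(|c| ^ 2 / (2 * l) + l / 2) + (-c) := by
      rw [sq_abs]
      field_simp
      ring
    rw [h1, h2, Real.exp_add]
    ring
  rw [setIntegral_congr_fun measurableSet_Ioi hcongr, MeasureTheory.integral_const_mul]
  rw [aux_key |c| (abs_nonneg c)]
  have h3 : (2 * Real.pi) ^ (-(1 : ℝ) / 2) * Real.sqrt (2 * Real.pi) = 1 := by
    rw [show (-(1 : ℝ) / 2) = -(1 / 2) by ring, Real.rpow_neg (by positivity),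
      ← Real.sqrt_eq_rpow]
    rw [inv_mul_cancel₀ (by positivity)]
  have h4 : -c + -|c| = -2 * max 0 c := by
    rcases le_total 0 c with h | h
    · rw [abs_of_nonneg h, max_eq_right h]; ring
    · rw [abs_of_nonpos h, max_eq_left h]; ring
  calc (2 * Real.pi) ^ (-(1 : ℝ) / 2) * Real.exp (-c) *
        (Real.sqrt (2 * Real.pi) * Real.exp (-|c|))
      = ((2 * Real.pi) ^ (-(1 : ℝ) / 2) * Real.sqrt (2 * Real.pi)) *
        (Real.exp (-c) * Real.exp (-|c|)) := by ring
    _ = Real.exp (-2 * max 0 c) := by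
        rw [h3, ← Real.exp_add, h4, one_mul]
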